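/- If X ⊆ ℝ is compact, a ∈ ℝ, and f : X → E is absolutely continuous with f constant equal to 0 at every point of X ∩ {a} (i.e., f(a)=0 if a ∈ X), then the truncated function f·χ_A with A = (-∞, a) ∩ X is absolutely continuous on X. -/

import Mathlib

open Set

def AbsCont {E : Type*} [NormedAddCommGroup E] {X : Set ℝ} (f : X → E) : Prop :=
  ∀ ε > (0 : ℝ), ∃ δ > (0 : ℝ), ∀ n : ℕ, ∀ a b : Fin n → X,
    (∀ i, (a i : ℝ) < b i) →
    (∀ i j, i ≠ j → Disjoint (Set.Ioo (a i : ℝ) (b i)) (Set.Ioo (a j : ℝ) (b j))) →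
    (∑ i, ((b i : ℝ) - a i)) < δ →
    (∑ i, ‖f (b i) - f (a i)‖) < ε

/-- If `f` is absolutely continuous and vanishes at `a` (whenever `a ∈ X`), then the
truncation `f·χ_{(-∞,a)∩X}` is absolutely continuous. -/
theorem absCont_truncation {E : Type*} [NormedAddCommGroup E] {X : Set ℝ}
    (hX : IsCompact X) (a : ℝ) (f : X → E) (hf : AbsCont f)
    (hfa : ∀ x : X, (x : ℝ) = a → f x = 0) :
    AbsCont (fun x : X => if (x : ℝ) < a then f x else 0) := by
  intro ε hε
  obtain ⟨δ₀, hδ₀, H⟩ := hf ε hε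
  by_cases ha : a ∈ X
  · refine ⟨δ₀, hδ₀, ?_⟩
    intro n aa bb hab hdisj hlen
    set b' : Fin n → X := fun i =>
      if (aa i : ℝ) < a ∧ ¬((bb i : ℝ) < a) then ⟨a, ha⟩ else bb i with hb'
    have hb'le : ∀ i, (b' i : ℝ) ≤ bb i := by
      intro i
      simp only [hb']
      split_ifs with h
      · exact le_of_not_gt h.2
      · exact le_rfl
    have hab' : ∀ i, (aa i : ℝ) < b' i := by
      intro i
      simp only [hb']
      split_ifs with h
      · exact h.1
      · exact hab i
    have hlen' : (∑ i, ((b' i : ℝ) - aa i)) < δ₀ := by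
      refine lt_of_le_of_lt (Finset.sum_le_sum fun i _ => ?_) hlen
      linarith [hb'le i]
    have hdisj' : ∀ i j, i ≠ j →
        Disjoint (Set.Ioo (aa i : ℝ) (b' i)) (Set.Ioo (aa j : ℝ) (b' j)) := by
      intro i j hij
      exact ((hdisj i j hij).mono_left (Set.Ioo_subset_Ioo_right (hb'le i))).mono_right
        (Set.Ioo_subset_Ioo_right (hb'le j))
    have key := H n aa b' hab' hdisj' hlen'
    refine lt_of_le_of_lt (Finset.sum_le_sum fun i _ => ?_) key
    by_cases h1 : (aa i : ℝ) < a
    · by_cases h2 : (bb i : ℝ) < a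
      · have : b' i = bb i := by simp [hb', h2]
        simp [h1, h2, this]
      · have hbi : b' i = ⟨a, ha⟩ := by simp [hb', h1, h2]
        have hf0 : f (b' i) = 0 := by rw [hbi]; exact hfa _ rfl
        simp [h1, h2, hf0]
    · have h2 : ¬((bb i : ℝ) < a) := fun h => h1 (lt_trans (hab i) h)
      simp [h1, h2]
  · -- a ∉ X : X is closed, so there is a ball around a disjoint from X
    have hXc : IsClosed X := hX.isClosed
    obtain ⟨r, hr, hball⟩ := Metric.isOpen_iff.mp hXc.isOpen_compl a ha
    refine ⟨min δ₀ r, lt_min hδ₀ hr, ?_⟩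
    intro n aa bb hab hdisj hlen
    have hterm : ∀ i, ((bb i : ℝ) - aa i) < r := by
      intro i
      have h1 : ((bb i : ℝ) - aa i) ≤ ∑ j, ((bb j : ℝ) - aa j) :=
        Finset.single_le_sum (f := fun j => ((bb j : ℝ) - aa j))
          (fun j _ => by linarith [hab j]) (Finset.mem_univ i)
      exact lt_of_le_of_lt h1 (lt_of_lt_of_le hlen (min_le_right _ _))
    have hlen' : (∑ i, ((bb i : ℝ) - aa i)) < δ₀ :=
      lt_of_lt_of_le hlen (min_le_left _ _)
    have key := H n aa bb hab hdisj hlen'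
    refine lt_of_le_of_lt (Finset.sum_le_sum fun i _ => ?_) key
    by_cases h1 : (aa i : ℝ) < a
    · have h2 : (bb i : ℝ) < a := by
        by_contra h2
        push_neg at h2
        have haX : (aa i : ℝ) ∉ Metric.ball a r := fun h => hball h (aa i).2
        have hbX : (bb i : ℝ) ∉ Metric.ball a r := fun h => hball h (bb i).2
        simp only [Metric.mem_ball, Real.dist_eq, not_lt] at haX hbX
        have : a - (aa i : ℝ) ≥ r := by
          rw [abs_sub_comm, abs_of_pos (by linarith : (0:ℝ) < a - (aa i : ℝ))] at haX
          exact haX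
        linarith [hterm i]
      simp [h1, h2]
    · have h2 : ¬((bb i : ℝ) < a) := fun h => h1 (lt_trans (hab i) h)
      simp [h1, h2]
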